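/- Conditioned generating function. For every i ∈ 𝕏, every s ∈ [0,1] and every n ≥ 1, one has 𝔼_i(s^{Z_n} | X_1, …, X_n) = f_{X_1} ∘ ⋯ ∘ f_{X_n}(s), ℙ_i-almost surely (with the convention s^0 = 1 and 0^0 = 1). -/

import Mathlib

/- STATEMENT 4: Conditioned generating function (Lemma 3.1).
𝕏 finite nonempty, (X_n) the Markov chain with stochastic matrix P under ℙ_i,
ξ_i ℕ-valued with pmf μ i and pgf f_i, (ξ_i^{n,j}) i.i.d. arrays independent of
the chain, Z_0 = 1, Z_n = Σ_{j=1}^{Z_{n−1}} ξ_{X_n}^{n,j}. For every i, s ∈ [0,1]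
and n ≥ 1: 𝔼_i(s^{Z_n} | X_1,…,X_n) = f_{X_1}∘⋯∘f_{X_n}(s), ℙ_i-a.s. -/

open Finset Filter MeasureTheory ProbabilityTheory

namespace Stmt4

variable {𝕏 : Type*}

/-- probability generating function of the pmf `μ i`. -/
noncomputable def pgf (μ : 𝕏 → ℕ → ℝ) (i : 𝕏) (s : ℝ) : ℝ :=
  ∑' m : ℕ, μ i m * s ^ m

/-- `fcomp μ env n s = f_{env 1} ∘ f_{env 2} ∘ ⋯ ∘ f_{env n} (s)`. -/
noncomputable def fcomp (μ : 𝕏 → ℕ → ℝ) (env : ℕ → 𝕏) : ℕ → ℝ → ℝ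
  | 0, s => s
  | n + 1, s => fcomp μ env n (pgf μ (env (n + 1)) s)

/-- measurable composition with a countable-valued selector -/
lemma measurable_comp_index {α ι : Type*} {mα : MeasurableSpace α} [Countable ι]
    (N : α → ι) (hN : ∀ i, MeasurableSet (N ⁻¹' {i}))
    (h : ι → α → ℕ) (hh : ∀ i, Measurable (h i)) :
    Measurable fun a => h (N a) a := by
  apply measurable_to_countable'
  intro l
  have : (fun a => h (N a) a) ⁻¹' {l} = ⋃ i, (N ⁻¹' {i}) ∩ ((h i) ⁻¹' {l}) := by
    ext a
    simp only [Set.mem_preimage, Set.mem_singleton_iff, Set.mem_iUnion, Set.mem_inter_iff]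
    exact ⟨fun hl => ⟨N a, rfl, hl⟩, fun ⟨i, hi, hl⟩ => by rw [hi]; exact hl⟩
  rw [this]
  exact MeasurableSet.iUnion fun i => (hN i).inter (hh i (measurableSet_singleton l))

lemma integral_comp_nat {Ω : Type*} [MeasurableSpace Ω] (Pr : Measure Ω) [IsProbabilityMeasure Pr]
    {N : Ω → ℕ} (hN : Measurable N) (c : ℕ → ℝ) (hc : ∀ m, ‖c m‖ ≤ 1) :
    ∫ ω, c (N ω) ∂Pr = ∑' m, (Pr (N ⁻¹' {m})).toReal * c m := by
  have hcm : Measurable c := measurable_of_countable c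
  have : IsProbabilityMeasure (Pr.map N) := Measure.isProbabilityMeasure_map hN.aemeasurable
  have hint : Integrable c (Pr.map N) :=
    (integrable_const (1 : ℝ)).mono' hcm.aestronglyMeasurable (Filter.Eventually.of_forall hc)
  rw [← integral_map hN.aemeasurable hcm.aestronglyMeasurable, integral_countable' hint]
  exact tsum_congr fun m => by
    rw [measureReal_def, Measure.map_apply hN (measurableSet_singleton m), smul_eq_mul]

lemma integral_partition {Ω : Type*} [MeasurableSpace Ω] (Pr : Measure Ω) [IsProbabilityMeasure Pr]
    {N : Ω → ℕ} (hN : Measurable N) {f : Ω → ℝ} (hf : Measurable f) (hbd : ∀ ω, ‖f ω‖ ≤ 1) :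
    ∫ ω, f ω ∂Pr = ∑' m : ℕ, ∫ ω, (if N ω = m then f ω else 0) ∂Pr := by
  have hsets : ∀ m : ℕ, MeasurableSet {ω | N ω = m} := fun m => hN (measurableSet_singleton m)
  have hmeas : ∀ m : ℕ, Measurable (fun ω => if N ω = m then f ω else 0) := fun m =>
    Measurable.ite (hsets m) hf measurable_const
  rw [show (∫ ω, f ω ∂Pr) = ∫ ω, ∑' m : ℕ, (if N ω = m then f ω else 0) ∂Pr by
    congr 1; funext ω
    rw [tsum_eq_single (N ω) (fun m hm => if_neg fun h => hm h.symm)]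
    · simp
  ]
  apply integral_tsum (fun m => (hmeas m).aestronglyMeasurable)
  have hle : ∀ m : ℕ, (∫⁻ ω, ‖(if N ω = m then f ω else 0)‖₊ ∂Pr) ≤ Pr (N ⁻¹' {m}) := by
    intro m
    calc ∫⁻ ω, ‖(if N ω = m then f ω else 0)‖₊ ∂Pr
        ≤ ∫⁻ ω, (N ⁻¹' {m}).indicator (fun _ => 1) ω ∂Pr := by
          apply lintegral_mono
          intro ω
          by_cases h : N ω = m
          · have hmem : ω ∈ N ⁻¹' {m} := by simpa using h
            simp only [h, if_pos, Set.indicator_of_mem hmem]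
            have h1 : (‖f ω‖₊ : ℝ) ≤ 1 := by simpa using hbd ω
            exact_mod_cast ENNReal.coe_le_one_iff.mpr (by exact_mod_cast h1)
          · simp [h]
      _ = Pr (N ⁻¹' {m}) := by
          exact lintegral_indicator_one (hN (measurableSet_singleton m))
  refine ne_of_lt (lt_of_le_of_lt (Summable.tsum_le_tsum hle ENNReal.summable ENNReal.summable) ?_)
  have : ∑' m : ℕ, Pr (N ⁻¹' {m}) = Pr (⋃ m : ℕ, N ⁻¹' {m}) :=
    (measure_iUnion (fun m m' hmm' => Set.disjoint_left.mpr (by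
      intro ω h1 h2
      have e1 : N ω = m := h1
      have e2 : N ω = m' := h2
      exact hmm' (e1 ▸ e2)))
      (fun m => hsets m)).symm
  rw [this]
  exact measure_lt_top Pr _


lemma summable_mu {μ : 𝕏 → ℕ → ℝ} (hμ_sum : ∀ i, ∑' m : ℕ, μ i m = 1) (i : 𝕏) :
    Summable (μ i) := by
  by_contra h
  have := hμ_sum i
  rw [tsum_eq_zero_of_not_summable h] at this
  norm_num at this

lemma pgf_mem_Icc {μ : 𝕏 → ℕ → ℝ} (hμ_nonneg : ∀ i m, 0 ≤ μ i m)
    (hμ_sum : ∀ i, ∑' m : ℕ, μ i m = 1) (i : 𝕏) {t : ℝ} (ht : t ∈ Set.Icc (0:ℝ) 1) :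
    pgf μ i t ∈ Set.Icc (0:ℝ) 1 := by
  have hsum := summable_mu hμ_sum i
  have hnn : ∀ m, 0 ≤ μ i m * t ^ m := fun m =>
    mul_nonneg (hμ_nonneg i m) (pow_nonneg ht.1 m)
  have hle : ∀ m, μ i m * t ^ m ≤ μ i m := fun m =>
    mul_le_of_le_one_right (hμ_nonneg i m) (pow_le_one₀ ht.1 ht.2)
  constructor
  · exact tsum_nonneg hnn
  · calc pgf μ i t ≤ ∑' m, μ i m :=
          Summable.tsum_le_tsum hle (Summable.of_nonneg_of_le hnn hle hsum) hsum
      _ = 1 := hμ_sum i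

lemma fcomp_mem_Icc {μ : 𝕏 → ℕ → ℝ} (hμ_nonneg : ∀ i m, 0 ≤ μ i m)
    (hμ_sum : ∀ i, ∑' m : ℕ, μ i m = 1) (e : ℕ → 𝕏) :
    ∀ (n : ℕ) {t : ℝ}, t ∈ Set.Icc (0:ℝ) 1 → fcomp μ e n t ∈ Set.Icc (0:ℝ) 1
  | 0, t, ht => ht
  | n + 1, t, ht =>
    fcomp_mem_Icc hμ_nonneg hμ_sum e n (pgf_mem_Icc hμ_nonneg hμ_sum _ ht)

lemma fcomp_congr {μ : 𝕏 → ℕ → ℝ} {e1 e2 : ℕ → 𝕏} :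
    ∀ {n : ℕ}, (∀ k, 1 ≤ k → k ≤ n → e1 k = e2 k) →
      ∀ s : ℝ, fcomp μ e1 n s = fcomp μ e2 n s
  | 0, _, s => rfl
  | n + 1, h, s => by
    show fcomp μ e1 n (pgf μ (e1 (n+1)) s) = fcomp μ e2 n (pgf μ (e2 (n+1)) s)
    rw [h (n+1) (by omega) (by omega)]
    exact fcomp_congr (fun k hk1 hk2 => h k hk1 (by omega)) _

section Omega

variable {Ω : Type*} [MeasurableSpace Ω]

noncomputable def Wp (ξ : 𝕏 → ℕ → ℕ → Ω → ℕ) (e : ℕ → 𝕏) : ℕ → Ω → ℕ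
  | 0 => fun _ => 1
  | k + 1 => fun ω => ∑ j ∈ Finset.range (Wp ξ e k ω), ξ (e (k + 1)) (k + 1) j ω

def wFun (e : ℕ → 𝕏) : ℕ → ((𝕏 × ℕ × ℕ) → ℕ) → ℕ
  | 0 => fun _ => 1
  | k + 1 => fun F => ∑ j ∈ Finset.range (wFun e k F), F (e (k + 1), k + 1, j)

lemma Wp_eq_wFun (ξ : 𝕏 → ℕ → ℕ → Ω → ℕ) (e : ℕ → 𝕏) :
    ∀ k (ω : Ω), Wp ξ e k ω = wFun e k (fun q => ξ q.1 q.2.1 q.2.2 ω)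
  | 0, ω => rfl
  | k + 1, ω => by
    show (∑ j ∈ Finset.range (Wp ξ e k ω), ξ (e (k + 1)) (k + 1) j ω) = _
    rw [Wp_eq_wFun ξ e k ω]
    rfl

lemma measurable_wFun (e : ℕ → 𝕏) : ∀ k, Measurable (wFun e k)
  | 0 => measurable_const
  | k + 1 => by
    have hN := measurable_wFun e k
    exact measurable_comp_index (wFun e k)
      (fun i => hN (measurableSet_singleton i))
      (fun m F => ∑ j ∈ Finset.range m, F (e (k + 1), k + 1, j))
      (fun m => Finset.measurable_sum _ fun j _ => measurable_pi_apply _)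

/-- the sigma-algebra generated by the variables `ξ q`, `q ∈ S`. -/
def sig (ξ : 𝕏 → ℕ → ℕ → Ω → ℕ) (S : Set (𝕏 × ℕ × ℕ)) : MeasurableSpace Ω :=
  ⨆ q ∈ S, MeasurableSpace.comap (fun ω => ξ q.1 q.2.1 q.2.2 ω) inferInstance

lemma sig_mono (ξ : 𝕏 → ℕ → ℕ → Ω → ℕ) {S T : Set (𝕏 × ℕ × ℕ)} (h : S ⊆ T) :
    sig ξ S ≤ sig ξ T :=
  iSup₂_le fun q hq => le_biSup (f := fun q : 𝕏 × ℕ × ℕ => MeasurableSpace.comap (fun ω => ξ q.1 q.2.1 q.2.2 ω) inferInstance) (h hq)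

lemma measurable_xi_sig (ξ : 𝕏 → ℕ → ℕ → Ω → ℕ) {S : Set (𝕏 × ℕ × ℕ)} {q : 𝕏 × ℕ × ℕ}
    (hq : q ∈ S) : Measurable[sig ξ S] (ξ q.1 q.2.1 q.2.2) :=
  Measurable.of_comap_le (le_biSup (f := fun q : 𝕏 × ℕ × ℕ => MeasurableSpace.comap (fun ω => ξ q.1 q.2.1 q.2.2 ω) inferInstance) hq)

lemma indepFun_of_disjoint (ξ : 𝕏 → ℕ → ℕ → Ω → ℕ) (hξ_meas : ∀ i n j, Measurable (ξ i n j))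
    (Pr : Measure Ω)
    (hξ_indep : iIndepFun (β := fun _ : 𝕏 × ℕ × ℕ => ℕ)
      (fun q ω => ξ q.1 q.2.1 q.2.2 ω) Pr)
    {S T : Set (𝕏 × ℕ × ℕ)} (hST : Disjoint S T) {U V : Ω → ℕ}
    (hU : Measurable[sig ξ S] U) (hV : Measurable[sig ξ T] V) :
    IndepFun U V Pr := by
  have h := indep_iSup_of_disjoint (fun q => (hξ_meas q.1 q.2.1 q.2.2).comap_le)
    hξ_indep.iIndep hST
  rw [IndepFun_iff_Indep]
  exact indep_of_indep_of_le_right (indep_of_indep_of_le_left h hU.comap_le) hV.comap_le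


lemma sig_le (ξ : 𝕏 → ℕ → ℕ → Ω → ℕ) (hξ_meas : ∀ i n j, Measurable (ξ i n j))
    (S : Set (𝕏 × ℕ × ℕ)) : sig ξ S ≤ ‹MeasurableSpace Ω› :=
  iSup₂_le fun q _ => (hξ_meas q.1 q.2.1 q.2.2).comap_le

lemma measurable_Wp_sig (ξ : 𝕏 → ℕ → ℕ → Ω → ℕ) (hξ_meas : ∀ i n j, Measurable (ξ i n j))
    (e : ℕ → 𝕏) : ∀ k, Measurable[sig ξ {q | q.2.1 ≤ k}] (Wp ξ e k)
  | 0 => measurable_const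
  | k + 1 => by
    have hmono : sig ξ {q | q.2.1 ≤ k} ≤ sig ξ {q | q.2.1 ≤ k + 1} :=
      sig_mono ξ (fun q hq => le_trans hq (Nat.le_succ k))
    have hN : Measurable[sig ξ {q | q.2.1 ≤ k + 1}] (Wp ξ e k) :=
      (measurable_Wp_sig ξ hξ_meas e k).mono hmono le_rfl
    exact measurable_comp_index (mα := sig ξ {q | q.2.1 ≤ k + 1}) (Wp ξ e k)
      (fun i => hN (measurableSet_singleton i))
      (fun m ω => ∑ j ∈ Finset.range m, ξ (e (k + 1)) (k + 1) j ω)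
      (fun m => Finset.measurable_sum _ fun j _ =>
        measurable_xi_sig ξ (S := {q | q.2.1 ≤ k + 1}) (q := (e (k + 1), k + 1, j))
          (Nat.le_refl (k + 1)))

lemma measurable_Wp (ξ : 𝕏 → ℕ → ℕ → Ω → ℕ) (hξ_meas : ∀ i n j, Measurable (ξ i n j))
    (e : ℕ → 𝕏) (k : ℕ) : Measurable (Wp ξ e k) :=
  (measurable_Wp_sig ξ hξ_meas e k).mono (sig_le ξ hξ_meas _) le_rfl

variable (μ : 𝕏 → ℕ → ℝ) (ξ : 𝕏 → ℕ → ℕ → Ω → ℕ) (Pr : Measure Ω) [IsProbabilityMeasure Pr]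

lemma integral_pow_xi (hξ_meas : ∀ i n j, Measurable (ξ i n j))
    (hlaw : ∀ (x : 𝕏) k j (m : ℕ), Pr {ω | ξ x k j ω = m} = ENNReal.ofReal (μ x m))
    (hμ_nonneg : ∀ i m, 0 ≤ μ i m)
    (x : 𝕏) (k j : ℕ) {t : ℝ} (ht : t ∈ Set.Icc (0:ℝ) 1) :
    ∫ ω, t ^ ξ x k j ω ∂Pr = pgf μ x t := by
  have hbd : ∀ m : ℕ, ‖t ^ m‖ ≤ 1 := fun m => by
    rw [Real.norm_eq_abs, abs_of_nonneg (pow_nonneg ht.1 m)]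
    exact pow_le_one₀ ht.1 ht.2
  rw [integral_comp_nat Pr (hξ_meas x k j) (fun m => t ^ m) hbd]
  refine tsum_congr fun m => ?_
  have : (ξ x k j) ⁻¹' {m} = {ω | ξ x k j ω = m} := rfl
  rw [this, hlaw x k j m, ENNReal.toReal_ofReal (hμ_nonneg x m)]

lemma integral_pow_sum (hξ_meas : ∀ i n j, Measurable (ξ i n j))
    (hξ_indep : iIndepFun (β := fun _ : 𝕏 × ℕ × ℕ => ℕ)
      (fun q ω => ξ q.1 q.2.1 q.2.2 ω) Pr)
    (hlaw : ∀ (x : 𝕏) k j (m : ℕ), Pr {ω | ξ x k j ω = m} = ENNReal.ofReal (μ x m))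
    (hμ_nonneg : ∀ i m, 0 ≤ μ i m)
    (x : 𝕏) (k : ℕ) {t : ℝ} (ht : t ∈ Set.Icc (0:ℝ) 1) :
    ∀ m : ℕ, ∫ ω, t ^ (∑ j ∈ Finset.range m, ξ x k j ω) ∂Pr = (pgf μ x t) ^ m
  | 0 => by simp
  | m + 1 => by
    have hpow : Measurable fun l : ℕ => t ^ l := measurable_of_countable _
    have hSm : Measurable[sig ξ {q | q.1 = x ∧ q.2.1 = k ∧ q.2.2 < m}]
        (fun ω => ∑ j ∈ Finset.range m, ξ x k j ω) :=
      Finset.measurable_sum _ fun j hj =>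
        measurable_xi_sig ξ (S := {q | q.1 = x ∧ q.2.1 = k ∧ q.2.2 < m}) (q := (x, k, j))
          ⟨rfl, rfl, Finset.mem_range.mp hj⟩
    have hη : Measurable[sig ξ {((x : 𝕏), (k : ℕ), (m : ℕ))}] (ξ x k m) :=
      measurable_xi_sig ξ (S := {((x : 𝕏), (k : ℕ), (m : ℕ))}) (q := (x, k, m)) rfl
    have hdisj : Disjoint {q : 𝕏 × ℕ × ℕ | q.1 = x ∧ q.2.1 = k ∧ q.2.2 < m}
        {((x : 𝕏), (k : ℕ), (m : ℕ))} := by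
      rw [Set.disjoint_right]
      rintro q hq ⟨-, -, hlt⟩
      rw [Set.mem_singleton_iff] at hq
      subst hq
      exact lt_irrefl m hlt
    have hind : IndepFun (fun ω => ∑ j ∈ Finset.range m, ξ x k j ω) (ξ x k m) Pr :=
      indepFun_of_disjoint ξ hξ_meas Pr hξ_indep hdisj hSm hη
    have hindc : IndepFun (fun ω => t ^ (∑ j ∈ Finset.range m, ξ x k j ω))
        (fun ω => t ^ ξ x k m ω) Pr := hind.comp hpow hpow
    have hSm_amb : Measurable fun ω => ∑ j ∈ Finset.range m, ξ x k j ω :=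
      Finset.measurable_sum _ fun j _ => hξ_meas x k j
    calc ∫ ω, t ^ (∑ j ∈ Finset.range (m + 1), ξ x k j ω) ∂Pr
        = ∫ ω, (t ^ (∑ j ∈ Finset.range m, ξ x k j ω)) * (t ^ ξ x k m ω) ∂Pr := by
          congr 1; funext ω; rw [Finset.sum_range_succ, pow_add]
      _ = (∫ ω, t ^ (∑ j ∈ Finset.range m, ξ x k j ω) ∂Pr) * ∫ ω, t ^ ξ x k m ω ∂Pr :=
          hindc.integral_fun_mul_eq_mul_integral (hpow.comp hSm_amb).aestronglyMeasurable
            (hpow.comp (hξ_meas x k m)).aestronglyMeasurable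
      _ = (pgf μ x t) ^ m * pgf μ x t := by
          rw [integral_pow_sum hξ_meas hξ_indep hlaw hμ_nonneg x k ht m,
            integral_pow_xi μ ξ Pr hξ_meas hlaw hμ_nonneg x k m ht]
      _ = (pgf μ x t) ^ (m + 1) := by ring

lemma integral_pow_Wp (hξ_meas : ∀ i n j, Measurable (ξ i n j))
    (hξ_indep : iIndepFun (β := fun _ : 𝕏 × ℕ × ℕ => ℕ)
      (fun q ω => ξ q.1 q.2.1 q.2.2 ω) Pr)
    (hlaw : ∀ (x : 𝕏) k j (m : ℕ), Pr {ω | ξ x k j ω = m} = ENNReal.ofReal (μ x m))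
    (hμ_nonneg : ∀ i m, 0 ≤ μ i m) (hμ_sum : ∀ i, ∑' m : ℕ, μ i m = 1)
    (e : ℕ → 𝕏) :
    ∀ n : ℕ, ∀ t ∈ Set.Icc (0:ℝ) 1, ∫ ω, t ^ (Wp ξ e n ω) ∂Pr = fcomp μ e n t
  | 0, t, ht => by simp [Wp, fcomp]
  | n + 1, t, ht => by
    have hpowbd : ∀ (u : ℝ), u ∈ Set.Icc (0:ℝ) 1 → ∀ l : ℕ, ‖u ^ l‖ ≤ 1 := fun u hu l => by
      rw [Real.norm_eq_abs, abs_of_nonneg (pow_nonneg hu.1 l)]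
      exact pow_le_one₀ hu.1 hu.2
    set x := e (n + 1) with hx
    set u := pgf μ x t with hu_def
    have hu : u ∈ Set.Icc (0:ℝ) 1 := pgf_mem_Icc hμ_nonneg hμ_sum x ht
    have hWn : Measurable (Wp ξ e n) := measurable_Wp ξ hξ_meas e n
    have hWn1 : Measurable (Wp ξ e (n + 1)) := measurable_Wp ξ hξ_meas e (n + 1)
    have hpow : Measurable fun l : ℕ => t ^ l := measurable_of_countable _
    rw [integral_partition Pr hWn
      (show Measurable fun ω => t ^ Wp ξ e (n + 1) ω from hpow.comp hWn1)
      (fun ω => hpowbd t ht _)]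
    have hterm : ∀ m : ℕ,
        (∫ ω, (if Wp ξ e n ω = m then t ^ Wp ξ e (n + 1) ω else 0) ∂Pr)
          = (Pr ((Wp ξ e n) ⁻¹' {m})).toReal * u ^ m := by
      intro m
      have hSm_amb : Measurable fun ω => ∑ j ∈ Finset.range m, ξ x (n + 1) j ω :=
        Finset.measurable_sum _ fun j _ => hξ_meas x (n + 1) j
      have hdisj : Disjoint {q : 𝕏 × ℕ × ℕ | q.2.1 ≤ n}
          {q : 𝕏 × ℕ × ℕ | q.1 = x ∧ q.2.1 = n + 1 ∧ q.2.2 < m} := by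
        rw [Set.disjoint_left]
        rintro q hq ⟨-, h2, -⟩
        rw [Set.mem_setOf_eq] at hq
        omega
      have hSm_sig : Measurable[sig ξ {q | q.1 = x ∧ q.2.1 = n + 1 ∧ q.2.2 < m}]
          (fun ω => ∑ j ∈ Finset.range m, ξ x (n + 1) j ω) :=
        Finset.measurable_sum _ fun j hj =>
          measurable_xi_sig ξ (S := {q | q.1 = x ∧ q.2.1 = n + 1 ∧ q.2.2 < m})
            (q := (x, n + 1, j)) ⟨rfl, rfl, Finset.mem_range.mp hj⟩
      have hind : IndepFun (Wp ξ e n) (fun ω => ∑ j ∈ Finset.range m, ξ x (n + 1) j ω) Pr :=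
        indepFun_of_disjoint ξ hξ_meas Pr hξ_indep hdisj
          (measurable_Wp_sig ξ hξ_meas e n) hSm_sig
      have hφ : Measurable fun l : ℕ => (if l = m then (1:ℝ) else 0) :=
        measurable_of_countable _
      have hindc : IndepFun (fun ω => if Wp ξ e n ω = m then (1:ℝ) else 0)
          (fun ω => t ^ (∑ j ∈ Finset.range m, ξ x (n + 1) j ω)) Pr :=
        hind.comp hφ hpow
      have step1 : (∫ ω, (if Wp ξ e n ω = m then t ^ Wp ξ e (n + 1) ω else 0) ∂Pr)
          = ∫ ω, (if Wp ξ e n ω = m then (1:ℝ) else 0) *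
              t ^ (∑ j ∈ Finset.range m, ξ x (n + 1) j ω) ∂Pr := by
        congr 1; funext ω
        by_cases h : Wp ξ e n ω = m
        · rw [if_pos h, if_pos h, one_mul]
          congr 2
          show (∑ j ∈ Finset.range (Wp ξ e n ω), ξ (e (n + 1)) (n + 1) j ω) = _
          rw [h]
        · rw [if_neg h, if_neg h, zero_mul]
      have step2 : (∫ ω, (if Wp ξ e n ω = m then (1:ℝ) else 0) ∂Pr)
          = (Pr ((Wp ξ e n) ⁻¹' {m})).toReal := by
        rw [integral_comp_nat Pr hWn (fun l => if l = m then (1:ℝ) else 0)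
          (fun l => by by_cases h : l = m <;> simp [h])]
        rw [tsum_eq_single m (fun l hl => by rw [if_neg hl, mul_zero])]
        rw [if_pos rfl, mul_one]
      rw [step1, hindc.integral_fun_mul_eq_mul_integral (hφ.comp hWn).aestronglyMeasurable
        (hpow.comp hSm_amb).aestronglyMeasurable, step2,
        integral_pow_sum μ ξ Pr hξ_meas hξ_indep hlaw hμ_nonneg x (n + 1) ht m]
    calc (∑' m : ℕ, ∫ ω, (if Wp ξ e n ω = m then t ^ Wp ξ e (n + 1) ω else 0) ∂Pr)
        = ∑' m : ℕ, (Pr ((Wp ξ e n) ⁻¹' {m})).toReal * u ^ m := tsum_congr hterm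
      _ = ∫ ω, u ^ (Wp ξ e n ω) ∂Pr :=
          (integral_comp_nat Pr hWn (fun l => u ^ l) (hpowbd u hu)).symm
      _ = fcomp μ e n u := integral_pow_Wp hξ_meas hξ_indep hlaw hμ_nonneg hμ_sum e n u hu
      _ = fcomp μ e (n + 1) t := rfl

end Omega

/-- extension of a finite path to an environment on `ℕ`, shifted by one. -/
noncomputable def ext [Nonempty 𝕏] {n : ℕ} (y : Fin n → 𝕏) : ℕ → 𝕏 := fun k =>
  if h : 1 ≤ k ∧ k ≤ n then y ⟨k - 1, by omega⟩ else Classical.arbitrary 𝕏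

lemma ext_spec [Nonempty 𝕏] {n : ℕ} (y : Fin n → 𝕏) (k : ℕ) (h1 : 1 ≤ k) (h2 : k ≤ n) :
    ext y k = y ⟨k - 1, by omega⟩ := by
  unfold ext
  rw [dif_pos ⟨h1, h2⟩]

theorem conditioned_generating_function
    [Fintype 𝕏] [Nonempty 𝕏]
    [MeasurableSpace 𝕏] [MeasurableSingletonClass 𝕏]
    (P : 𝕏 → 𝕏 → ℝ)
    (hP_nonneg : ∀ i j, 0 ≤ P i j) (hP_row : ∀ i, ∑ j, P i j = 1)
    (μ : 𝕏 → ℕ → ℝ)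
    (hμ_nonneg : ∀ i m, 0 ≤ μ i m) (hμ_sum : ∀ i, ∑' m : ℕ, μ i m = 1)
    {Ω : Type*} [MeasurableSpace Ω]
    (Pr : 𝕏 → Measure Ω) (hPr : ∀ i, IsProbabilityMeasure (Pr i))
    (X : ℕ → Ω → 𝕏) (hX : ∀ n, Measurable (X n))
    (hchain : ∀ i (n : ℕ) (x : ℕ → 𝕏),
      Pr i {ω | X 0 ω = i ∧ ∀ k < n, X (k + 1) ω = x k} =
        ENNReal.ofReal (∏ k ∈ Finset.range n, P (if k = 0 then i else x (k - 1)) (x k)))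
    (ξ : 𝕏 → ℕ → ℕ → Ω → ℕ) (hξ_meas : ∀ i n j, Measurable (ξ i n j))
    (hξ_law : ∀ i₀ i n j (m : ℕ), Pr i₀ {ω | ξ i n j ω = m} = ENNReal.ofReal (μ i m))
    (hξ_indep : ∀ i₀, iIndepFun (β := fun _ : 𝕏 × ℕ × ℕ => ℕ)
      (fun q ω => ξ q.1 q.2.1 q.2.2 ω) (Pr i₀))
    (hξX_indep : ∀ i₀, IndepFun
      (fun ω (q : 𝕏 × ℕ × ℕ) => ξ q.1 q.2.1 q.2.2 ω)
      (fun ω (n : ℕ) => X n ω) (Pr i₀))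
    (Z : ℕ → Ω → ℕ) (hZ0 : ∀ ω, Z 0 ω = 1)
    (hZrec : ∀ n ω, Z (n + 1) ω = ∑ j ∈ Finset.range (Z n ω), ξ (X (n + 1) ω) (n + 1) j ω) :
    ∀ (i : 𝕏) (s : ℝ), s ∈ Set.Icc (0 : ℝ) 1 → ∀ n : ℕ, 1 ≤ n →
      (Pr i)[(fun ω => s ^ Z n ω) |
          MeasurableSpace.comap (fun ω (k : Fin n) => X (k.1 + 1) ω) inferInstance]
        =ᵐ[Pr i] fun ω => fcomp μ (fun k => X k ω) n s := by
  intro i s hs n hn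
  haveI := hPr i
  set V : Ω → (Fin n → 𝕏) := fun ω (k : Fin n) => X (k.1 + 1) ω with hV_def
  have hV : Measurable V := measurable_pi_lambda _ fun k => hX _
  have hm : MeasurableSpace.comap V (inferInstance : MeasurableSpace (Fin n → 𝕏))
      ≤ (inferInstance : MeasurableSpace Ω) := hV.comap_le
  haveI : IsFiniteMeasure ((Pr i).trim hm) := isFiniteMeasure_trim hm
  -- all subsets of the (finite) path space are measurable
  have hsing : ∀ y : Fin n → 𝕏, MeasurableSet ({y} : Set (Fin n → 𝕏)) := by
    intro y
    have : ({y} : Set (Fin n → 𝕏)) = ⋂ k : Fin n, (fun x : Fin n → 𝕏 => x k) ⁻¹' {y k} := by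
      ext x
      simp [funext_iff]
    rw [this]
    exact MeasurableSet.iInter fun k => (measurable_pi_apply k) (measurableSet_singleton _)
  have hall : ∀ B : Set (Fin n → 𝕏), MeasurableSet B := by
    intro B
    have : B = ⋃ y ∈ B, ({y} : Set _) := by simp
    rw [this]
    exact MeasurableSet.biUnion (Set.to_countable B) fun y _ => hsing y
  -- measurability of Z
  have hZmeas : ∀ k, Measurable (Z k) := by
    intro k
    induction k with
    | zero =>
      have : Z 0 = fun _ => 1 := funext hZ0
      rw [this]
      exact measurable_const
    | succ k ih =>
      have : Z (k + 1) = fun ω => ∑ j ∈ Finset.range (Z k ω), ξ (X (k + 1) ω) (k + 1) j ω :=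
        funext (hZrec k)
      rw [this]
      refine measurable_comp_index (Z k) (fun l => ih (measurableSet_singleton l))
        (fun mv ω => ∑ j ∈ Finset.range mv, ξ (X (k + 1) ω) (k + 1) j ω) (fun mv => ?_)
      refine Finset.measurable_sum _ fun j _ => ?_
      exact measurable_comp_index (X (k + 1)) (fun x => hX (k + 1) (measurableSet_singleton x))
        (fun x ω => ξ x (k + 1) j ω) (fun x => hξ_meas x (k + 1) j)
  -- integrand and its properties
  have hpowbd : ∀ (u : ℝ), u ∈ Set.Icc (0:ℝ) 1 → ∀ l : ℕ, ‖u ^ l‖ ≤ 1 := fun u hu l => by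
    rw [Real.norm_eq_abs, abs_of_nonneg (pow_nonneg hu.1 l)]
    exact pow_le_one₀ hu.1 hu.2
  have hfmeas : Measurable fun ω => s ^ Z n ω :=
    (measurable_of_countable (fun l : ℕ => s ^ l)).comp (hZmeas n)
  have hfint : Integrable (fun ω => s ^ Z n ω) (Pr i) :=
    (integrable_const (1:ℝ)).mono' hfmeas.aestronglyMeasurable
      (Filter.Eventually.of_forall fun ω => hpowbd s hs _)
  -- the candidate conditional expectation
  set g : Ω → ℝ := fun ω => fcomp μ (fun k => X k ω) n s with hg_def
  set G : (Fin n → 𝕏) → ℝ := fun y => fcomp μ (ext y) n s with hG_def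
  have heXV : ∀ ω : Ω, ∀ k, 1 ≤ k → k ≤ n → ext (V ω) k = X k ω := by
    intro ω k h1 h2
    rw [ext_spec (V ω) k h1 h2]
    show X ((k - 1) + 1) ω = X k ω
    congr 1
    omega
  have hgG : g = fun ω => G (V ω) := by
    funext ω
    exact (fcomp_congr (fun k h1 h2 => (heXV ω k h1 h2).symm) s)
  have hGmeas : Measurable G := fun t _ => hall _
  have hgm' : Measurable[MeasurableSpace.comap V (inferInstance : MeasurableSpace (Fin n → 𝕏))] g := by
    rw [hgG]
    exact hGmeas.comp (Measurable.of_comap_le le_rfl)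
  have hgmeas : Measurable g := hgm'.mono hm le_rfl
  have hgbd : ∀ ω, ‖g ω‖ ≤ 1 := by
    intro ω
    have := fcomp_mem_Icc hμ_nonneg hμ_sum (fun k => X k ω) n hs
    rw [Real.norm_eq_abs, abs_of_nonneg this.1]
    exact this.2
  have hgint : Integrable g (Pr i) :=
    (integrable_const (1:ℝ)).mono' hgmeas.aestronglyMeasurable
      (Filter.Eventually.of_forall hgbd)
  -- per-atom computation
  have hmemA : ∀ (y : Fin n → 𝕏) (ω : Ω), ω ∈ V ⁻¹' {y} ↔ ∀ k : Fin n, X (k.1 + 1) ω = y k := by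
    intro y ω
    simp only [Set.mem_preimage, Set.mem_singleton_iff, hV_def, funext_iff]
  have heX : ∀ (y : Fin n → 𝕏) (ω : Ω), ω ∈ V ⁻¹' {y} → ∀ k, 1 ≤ k → k ≤ n →
      X k ω = ext y k := by
    intro y ω hω k h1 h2
    have hVω : V ω = y := hω
    rw [← hVω]
    exact (heXV ω k h1 h2).symm
  have hZW : ∀ (y : Fin n → 𝕏) (ω : Ω), ω ∈ V ⁻¹' {y} → ∀ k, k ≤ n →
      Z k ω = Wp ξ (ext y) k ω := by
    intro y ω hω k
    induction k with
    | zero => intro _; rw [hZ0 ω]; rfl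
    | succ k ih =>
      intro hk
      rw [hZrec k ω]
      show _ = ∑ j ∈ Finset.range (Wp ξ (ext y) k ω), ξ (ext y (k + 1)) (k + 1) j ω
      rw [heX y ω hω (k + 1) (by omega) hk, ih (by omega)]
  have hatomf : ∀ y : Fin n → 𝕏,
      ∫ ω in V ⁻¹' {y}, s ^ Z n ω ∂(Pr i)
        = fcomp μ (ext y) n s * ((Pr i) (V ⁻¹' {y})).toReal := by
    intro y
    have hAmeas : MeasurableSet (V ⁻¹' {y}) := hV (hsing y)
    have key : ∫ ω, s ^ (Wp ξ (ext y) n ω) ∂(Pr i) = fcomp μ (ext y) n s :=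
      integral_pow_Wp μ ξ (Pr i) hξ_meas (hξ_indep i)
        (fun x k j mv => hξ_law i x k j mv) hμ_nonneg hμ_sum (ext y) n s hs
    set Φ : ((𝕏 × ℕ × ℕ) → ℕ) → ℝ := fun F => s ^ wFun (ext y) n F with hΦ_def
    have hΦ : Measurable Φ :=
      (measurable_of_countable (fun l : ℕ => s ^ l)).comp (measurable_wFun (ext y) n)
    set B : Set (ℕ → 𝕏) := {x | ∀ k : Fin n, x (k.1 + 1) = y k} with hB_def
    have hB : MeasurableSet B := by
      have : B = ⋂ k : Fin n, (fun x : ℕ → 𝕏 => x (k.1 + 1)) ⁻¹' {y k} := by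
        ext x
        simp [hB_def]
      rw [this]
      exact MeasurableSet.iInter fun k =>
        (measurable_pi_apply (k.1 + 1)) (measurableSet_singleton _)
    set ψ : (ℕ → 𝕏) → ℝ := B.indicator 1 with hψ_def
    have hψ : Measurable ψ := measurable_const.indicator hB
    have hcomp : IndepFun (fun ω => Φ (fun q => ξ q.1 q.2.1 q.2.2 ω))
        (fun ω => ψ (fun k => X k ω)) (Pr i) := (hξX_indep i).comp hΦ hψ
    have hψX : ∀ ω, ψ (fun k => X k ω) = (V ⁻¹' {y}).indicator 1 ω := by
      intro ω
      rw [hψ_def]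
      have hiff : (fun k => X k ω) ∈ B ↔ ω ∈ V ⁻¹' {y} := by
        rw [hmemA y ω]
        exact Iff.rfl
      by_cases h : ω ∈ V ⁻¹' {y}
      · rw [Set.indicator_of_mem (hiff.mpr h), Set.indicator_of_mem h]
        rfl
      · rw [Set.indicator_of_notMem (fun hc => h (hiff.mp hc)),
          Set.indicator_of_notMem h]
    rw [← integral_indicator hAmeas]
    have hrw : (V ⁻¹' {y}).indicator (fun ω => s ^ Z n ω)
        = fun ω => Φ (fun q => ξ q.1 q.2.1 q.2.2 ω) * ψ (fun k => X k ω) := by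
      funext ω
      rw [hψX ω]
      by_cases h : ω ∈ V ⁻¹' {y}
      · rw [Set.indicator_of_mem h, Set.indicator_of_mem h]
        show s ^ Z n ω = Φ (fun q => ξ q.1 q.2.1 q.2.2 ω) * 1
        rw [mul_one, hZW y ω h n le_rfl, Wp_eq_wFun ξ (ext y) n ω]
      · rw [Set.indicator_of_notMem h, Set.indicator_of_notMem h, mul_zero]
    rw [hrw, hcomp.integral_fun_mul_eq_mul_integral
      (hΦ.comp (measurable_pi_lambda _ fun q => hξ_meas q.1 q.2.1 q.2.2)).aestronglyMeasurable
      (hψ.comp (measurable_pi_lambda _ fun k => hX k)).aestronglyMeasurable]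
    have h1 : ∫ ω, Φ (fun q => ξ q.1 q.2.1 q.2.2 ω) ∂(Pr i) = fcomp μ (ext y) n s := by
      rw [show (fun ω => Φ (fun q => ξ q.1 q.2.1 q.2.2 ω))
          = fun ω => s ^ (Wp ξ (ext y) n ω) from
        funext fun ω => by rw [Wp_eq_wFun ξ (ext y) n ω]]
      exact key
    have h2 : ∫ ω, ψ (fun k => X k ω) ∂(Pr i) = ((Pr i) (V ⁻¹' {y})).toReal := by
      rw [show (fun ω => ψ (fun k => X k ω)) = (V ⁻¹' {y}).indicator 1 from funext hψX]
      exact integral_indicator_one hAmeas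
    rw [h1, h2]
  have hatomg : ∀ y : Fin n → 𝕏,
      ∫ ω in V ⁻¹' {y}, g ω ∂(Pr i)
        = fcomp μ (ext y) n s * ((Pr i) (V ⁻¹' {y})).toReal := by
    intro y
    have hAmeas : MeasurableSet (V ⁻¹' {y}) := hV (hsing y)
    have hEq : Set.EqOn g (fun _ => fcomp μ (ext y) n s) (V ⁻¹' {y}) := by
      intro ω hω
      exact fcomp_congr (fun k h1 h2 => heX y ω hω k h1 h2) s
    rw [setIntegral_congr_fun hAmeas hEq, setIntegral_const, smul_eq_mul, measureReal_def, mul_comm]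
  -- conclude by uniqueness of the conditional expectation
  refine (ae_eq_condExp_of_forall_setIntegral_eq hm hfint
    (fun t _ _ => hgint.integrableOn) ?_ ?_).symm
  · intro t ht _
    obtain ⟨B', hB', rfl⟩ := ht
    classical
    set Bf := B'.toFinite.toFinset with hBf_def
    have hUnion : V ⁻¹' B' = ⋃ y ∈ Bf, V ⁻¹' {y} := by
      ext ω
      simp only [Set.mem_preimage, Set.mem_iUnion, Set.mem_singleton_iff,
        Set.Finite.mem_toFinset, hBf_def]
      exact ⟨fun h => ⟨V ω, h, rfl⟩, fun ⟨y, hy, h⟩ => by rw [h]; exact hy⟩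
    have hpair : (↑Bf : Set (Fin n → 𝕏)).Pairwise
        (Function.onFun Disjoint fun y => V ⁻¹' {y}) := by
      intro y _ y' _ hne
      refine Set.disjoint_left.mpr fun ω h1 h2 => ?_
      have e1 : V ω = y := h1
      have e2 : V ω = y' := h2
      exact hne (e1.symm.trans e2)
    rw [hUnion,
      integral_biUnion_finset Bf (fun y _ => hV (hsing y)) hpair
        (fun y _ => hgint.integrableOn),
      integral_biUnion_finset Bf (fun y _ => hV (hsing y)) hpair
        (fun y _ => hfint.integrableOn)]
    exact Finset.sum_congr rfl fun y _ => (hatomg y).trans (hatomf y).symm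
  · exact ⟨fun ω => G (V ω),
      (hGmeas.comp (Measurable.of_comap_le le_rfl)).stronglyMeasurable,
      hgG ▸ Filter.EventuallyEq.rfl⟩

end Stmt4
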